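/- (Hypergraph product quantum code from a classical code: [[2n(n−k)+k², k², d_Q ≥ d]].) Let δ ∈ M_{(n−k) × n}(F2) have full row rank n − k, and suppose every nonzero c ∈ ker(δ) has |c| ≥ d (δ is a parity check matrix of an [n, k, ≥d] classical code with no check redundancy). Define δ̃_{−1} := [1_n ⊗ δᵀ ; δ ⊗ 1_{n−k}] : F2^{n(n−k)} → F2^{n² + (n−k)²} and δ̃_0 := [δ ⊗ 1_n , 1_{n−k} ⊗ δᵀ] : F2^{n² + (n−k)²} → F2^{(n−k)n}. Then: (a) the number of physical qubits is n² + (n−k)² = 2n(n−k) + k²; (b) the number of logical qubits is nullity(δ̃_0) − rank(δ̃_{−1}) = k²; (c) every c with δ̃_0·c = 0 and c not in the image of δ̃_{−1} has |c| ≥ d, and every c with δ̃_{−1}ᵀ·c = 0 and c not in the image of δ̃_0ᵀ has |c| ≥ d (so the quantum code distance d_Q is at least d). -/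

import Mathlib

open Matrix
open scoped Kronecker

abbrev F2 := ZMod 2

/-- Hamming weight of a vector over `F2`. -/
def vwt {ι : Type*} [Fintype ι] (v : ι → F2) : ℕ :=
  (Finset.univ.filter fun i => v i ≠ 0).card

/-- Hamming weight of a matrix over `F2` (number of nonzero entries). -/
def mwt {ι κ : Type*} [Fintype ι] [Fintype κ] (M : Matrix ι κ F2) : ℕ :=
  (Finset.univ.filter fun p : ι × κ => M p.1 p.2 ≠ 0).card

/-- Nullity of a matrix over `F2`: dimension of the kernel of the induced linear map. -/
noncomputable def nullity {ι κ : Type*} [Fintype ι] [Fintype κ] (M : Matrix ι κ F2) : ℕ :=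
  Module.finrank F2 (LinearMap.ker M.mulVecLin)

lemma f2_add_eq (a b : F2) (h : a + b = 0) : a = b := by
  have : -b = a := neg_eq_of_add_eq_zero_left h
  rw [← this, CharTwo.neg_eq]

lemma exists_right_inverse {m n' : ℕ} (A : Matrix (Fin m) (Fin n') F2) (h : A.rank = m) :
    ∃ R : Matrix (Fin n') (Fin m) F2, A * R = 1 := by
  have hr : LinearMap.range A.mulVecLin = ⊤ := by
    apply Submodule.eq_top_of_finrank_eq
    rw [← Matrix.rank]
    simp [h]
  obtain ⟨g, hg⟩ := A.mulVecLin.exists_rightInverse_of_surjective hr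
  refine ⟨LinearMap.toMatrix' g, ?_⟩
  have h2 : (A * LinearMap.toMatrix' g).mulVecLin = (1 : Matrix (Fin m) (Fin m) F2).mulVecLin := by
    rw [Matrix.mulVecLin_mul, Matrix.mulVecLin_one,
      ← Matrix.toLin'_apply' (LinearMap.toMatrix' g), Matrix.toLin'_toMatrix']
    exact hg
  exact Matrix.toLin'.injective (by rw [Matrix.toLin'_apply', Matrix.toLin'_apply']; exact h2)

lemma vwt_le_of_injOn {ι κ : Type*} [Fintype ι] [Fintype κ] (w : ι → F2) (v : κ → F2)
    (f : ι → κ) (hmap : ∀ i, w i ≠ 0 → v (f i) ≠ 0)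
    (hinj : ∀ i i', w i ≠ 0 → w i' ≠ 0 → f i = f i' → i = i') : vwt w ≤ vwt v := by
  classical
  apply Finset.card_le_card_of_injOn f
  · intro i hi
    simp only [Finset.coe_filter, Finset.mem_coe, Finset.mem_filter, Finset.mem_univ, true_and,
      Set.mem_setOf_eq] at hi ⊢
    exact hmap i hi
  · intro i hi i' hi' h
    simp only [Finset.coe_filter, Finset.mem_univ, Set.mem_setOf_eq, true_and] at hi hi'
    exact hinj i i' hi hi' h

lemma rank_of_inj {ι κ : Type*} [Fintype ι] [Fintype κ] [DecidableEq κ] (M : Matrix ι κ F2)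
    (h : ∀ v, M *ᵥ v = 0 → v = 0) : M.rank = Fintype.card κ := by
  have h1 := M.mulVecLin.finrank_range_add_finrank_ker
  rw [Matrix.ker_mulVecLin_eq_bot_iff.mpr h] at h1
  simp only [finrank_bot, add_zero, Module.finrank_fintype_fun_eq_card] at h1
  rw [Matrix.rank, h1]

lemma rank_of_surj {ι κ : Type*} [Fintype ι] [Fintype κ] [DecidableEq κ] (M : Matrix ι κ F2)
    (h : ∀ y, ∃ v, M *ᵥ v = y) : M.rank = Fintype.card ι ∧
      M.rank + nullity M = Fintype.card κ := by
  have h1 := M.mulVecLin.finrank_range_add_finrank_ker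
  have hr : LinearMap.range M.mulVecLin = ⊤ := LinearMap.range_eq_top.mpr h
  constructor
  · rw [Matrix.rank, hr]
    simp [Module.finrank_fintype_fun_eq_card]
  · rw [Matrix.rank, nullity]
    simpa [Module.finrank_fintype_fun_eq_card] using h1

lemma sum_sum_congr_swap {α β : Type*} [Fintype α] [Fintype β]
    (f : α → β → F2) (g : β → α → F2) (h : ∀ a b, f a b = g b a) :
    ∑ a, ∑ b, f a b = ∑ b, ∑ a, g b a := by
  rw [Finset.sum_comm]
  exact Finset.sum_congr rfl fun b _ => Finset.sum_congr rfl fun a _ => h a b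

theorem hypergraph_product_code
    (n k d : ℕ) (hk : k ≤ n)
    (δ : Matrix (Fin (n - k)) (Fin n) F2)
    (hrank : δ.rank = n - k)
    (hdist : ∀ c : Fin n → F2, c ≠ 0 → δ.mulVec c = 0 → d ≤ vwt c)
    (dm1 : Matrix ((Fin n × Fin n) ⊕ (Fin (n - k) × Fin (n - k))) (Fin n × Fin (n - k)) F2)
    (hdm1 : dm1 = Matrix.fromRows
      ((1 : Matrix (Fin n) (Fin n) F2) ⊗ₖ δᵀ)
      (δ ⊗ₖ (1 : Matrix (Fin (n - k)) (Fin (n - k)) F2)))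
    (d0 : Matrix (Fin (n - k) × Fin n) ((Fin n × Fin n) ⊕ (Fin (n - k) × Fin (n - k))) F2)
    (hd0 : d0 = Matrix.fromCols
      (δ ⊗ₖ (1 : Matrix (Fin n) (Fin n) F2))
      ((1 : Matrix (Fin (n - k)) (Fin (n - k)) F2) ⊗ₖ δᵀ)) :
    -- (a) number of physical qubits
    n^2 + (n - k)^2 = 2 * n * (n - k) + k^2 ∧
    -- (b) number of logical qubits
    (nullity d0 : ℤ) - (dm1.rank : ℤ) = (k : ℤ)^2 ∧
    -- (c) quantum code distance at least d
    (∀ c : ((Fin n × Fin n) ⊕ (Fin (n - k) × Fin (n - k))) → F2,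
      d0.mulVec c = 0 → (¬ ∃ y, dm1.mulVec y = c) → d ≤ vwt c) ∧
    (∀ c : ((Fin n × Fin n) ⊕ (Fin (n - k) × Fin (n - k))) → F2,
      dm1ᵀ.mulVec c = 0 → (¬ ∃ y, d0ᵀ.mulVec y = c) → d ≤ vwt c) := by
  classical
  subst hdm1 hd0
  obtain ⟨R, hR⟩ := exists_right_inverse δ hrank
  have hδR : ∀ a b, (∑ j, δ a j * R j b) = if a = b then (1 : F2) else 0 := by
    intro a b
    have := congrFun (congrFun hR a) b
    simpa [Matrix.mul_apply, Matrix.one_apply] using this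
  -- entry formulas
  have hd0e : ∀ (c : ((Fin n × Fin n) ⊕ (Fin (n - k) × Fin (n - k))) → F2) a j,
      ((Matrix.fromCols (δ ⊗ₖ (1 : Matrix (Fin n) (Fin n) F2))
        ((1 : Matrix (Fin (n - k)) (Fin (n - k)) F2) ⊗ₖ δᵀ)) *ᵥ c) (a, j)
      = (∑ i, δ a i * c (Sum.inl (i, j))) + (∑ b, c (Sum.inr (a, b)) * δ b j) := by
    intro c a j
    simp [Matrix.mulVec, dotProduct, Fintype.sum_sum_type, Fintype.sum_prod_type,
      Matrix.one_apply, ite_mul, mul_ite, mul_comm]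
  have hdm1l : ∀ (y : (Fin n × Fin (n - k)) → F2) i j,
      ((Matrix.fromRows ((1 : Matrix (Fin n) (Fin n) F2) ⊗ₖ δᵀ)
        (δ ⊗ₖ (1 : Matrix (Fin (n - k)) (Fin (n - k)) F2))) *ᵥ y) (Sum.inl (i, j))
      = ∑ b', y (i, b') * δ b' j := by
    intro y i j
    simp [Matrix.mulVec, dotProduct, Fintype.sum_prod_type,
      Matrix.one_apply, ite_mul, mul_ite, mul_comm]
  have hdm1r : ∀ (y : (Fin n × Fin (n - k)) → F2) a b,
      ((Matrix.fromRows ((1 : Matrix (Fin n) (Fin n) F2) ⊗ₖ δᵀ)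
        (δ ⊗ₖ (1 : Matrix (Fin (n - k)) (Fin (n - k)) F2))) *ᵥ y) (Sum.inr (a, b))
      = ∑ i', δ a i' * y (i', b) := by
    intro y a b
    simp [Matrix.mulVec, dotProduct, Fintype.sum_prod_type,
      Matrix.one_apply, ite_mul, mul_ite, mul_comm]
  have hdm1te : ∀ (c : ((Fin n × Fin n) ⊕ (Fin (n - k) × Fin (n - k))) → F2) i b,
      ((Matrix.fromRows ((1 : Matrix (Fin n) (Fin n) F2) ⊗ₖ δᵀ)
        (δ ⊗ₖ (1 : Matrix (Fin (n - k)) (Fin (n - k)) F2)))ᵀ *ᵥ c) (i, b)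
      = (∑ j', δ b j' * c (Sum.inl (i, j'))) + ∑ a, δ a i * c (Sum.inr (a, b)) := by
    intro c i b
    simp [Matrix.mulVec, dotProduct, Fintype.sum_sum_type, Fintype.sum_prod_type,
      Matrix.one_apply, ite_mul, mul_ite, mul_comm]
  have hd0tl : ∀ (y : (Fin (n - k) × Fin n) → F2) i j,
      ((Matrix.fromCols (δ ⊗ₖ (1 : Matrix (Fin n) (Fin n) F2))
        ((1 : Matrix (Fin (n - k)) (Fin (n - k)) F2) ⊗ₖ δᵀ))ᵀ *ᵥ y) (Sum.inl (i, j))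
      = ∑ a, δ a i * y (a, j) := by
    intro y i j
    simp [Matrix.mulVec, dotProduct, Fintype.sum_prod_type,
      Matrix.one_apply, ite_mul, mul_ite, mul_comm]
  have hd0tr : ∀ (y : (Fin (n - k) × Fin n) → F2) b b',
      ((Matrix.fromCols (δ ⊗ₖ (1 : Matrix (Fin n) (Fin n) F2))
        ((1 : Matrix (Fin (n - k)) (Fin (n - k)) F2) ⊗ₖ δᵀ))ᵀ *ᵥ y) (Sum.inr (b, b'))
      = ∑ j', y (b, j') * δ b' j' := by
    intro y b b'
    simp [Matrix.mulVec, dotProduct, Fintype.sum_prod_type,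
      Matrix.one_apply, ite_mul, mul_ite, mul_comm]
  -- special kernel vectors of δ
  have zker : ∀ j : Fin n,
      δ *ᵥ (fun j' => (if j' = j then (1:F2) else 0) + ∑ b, R j' b * δ b j) = 0 := by
    intro j
    funext a
    show (∑ j', δ a j' * ((if j' = j then (1:F2) else 0) + ∑ b, R j' b * δ b j)) = 0
    have h1 : (∑ j', δ a j' * ((if j' = j then (1:F2) else 0) + ∑ b, R j' b * δ b j))
        = (∑ j', δ a j' * (if j' = j then (1:F2) else 0))
          + ∑ j', δ a j' * ∑ b, R j' b * δ b j := by
      rw [← Finset.sum_add_distrib]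
      exact Finset.sum_congr rfl fun _ _ => mul_add _ _ _
    have h2 : (∑ j', δ a j' * (if j' = j then (1:F2) else 0)) = δ a j := by
      simp [mul_ite]
    have h3 : (∑ j', δ a j' * ∑ b, R j' b * δ b j)
        = ∑ b, (∑ j', δ a j' * R j' b) * δ b j := by
      simp only [Finset.mul_sum, Finset.sum_mul]
      exact sum_sum_congr_swap _ _ fun _ _ => by ring
    have h4 : (∑ b, (∑ j', δ a j' * R j' b) * δ b j) = δ a j := by
      simp [hδR, ite_mul]
    rw [h1, h2, h3, h4, CharTwo.add_self_eq_zero]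
  refine ⟨?_, ?_, ?_, ?_⟩
  · -- (a)
    obtain ⟨m, rfl⟩ : ∃ m, n = m + k := ⟨n - k, (Nat.sub_add_cancel hk).symm⟩
    rw [Nat.add_sub_cancel]
    ring
  · -- (b)
    have hdm1inj : ∀ v : Fin n × Fin (n - k) → F2,
        (Matrix.fromRows ((1 : Matrix (Fin n) (Fin n) F2) ⊗ₖ δᵀ)
          (δ ⊗ₖ (1 : Matrix (Fin (n - k)) (Fin (n - k)) F2))) *ᵥ v = 0 → v = 0 := by
      intro v hv
      have ht : ∀ i j, (∑ b, v (i, b) * δ b j) = 0 := by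
        intro i j
        rw [← hdm1l v i j]
        exact congrFun hv (Sum.inl (i, j))
      funext p
      obtain ⟨i, b0⟩ := p
      have key : v (i, b0) = ∑ j, (∑ b, v (i, b) * δ b j) * R j b0 := by
        have h3 : (∑ j, (∑ b, v (i, b) * δ b j) * R j b0)
            = ∑ b, v (i, b) * ∑ j, δ b j * R j b0 := by
          simp only [Finset.mul_sum, Finset.sum_mul]
          exact sum_sum_congr_swap _ _ fun _ _ => by ring
        rw [h3]
        simp [hδR, mul_ite]
      rw [key]
      simp [ht]
    have hrank1 : (Matrix.fromRows ((1 : Matrix (Fin n) (Fin n) F2) ⊗ₖ δᵀ)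
        (δ ⊗ₖ (1 : Matrix (Fin (n - k)) (Fin (n - k)) F2))).rank = n * (n - k) := by
      rw [rank_of_inj _ hdm1inj]
      simp
    have hd0surj : ∀ y : Fin (n - k) × Fin n → F2,
        ∃ v, (Matrix.fromCols (δ ⊗ₖ (1 : Matrix (Fin n) (Fin n) F2))
          ((1 : Matrix (Fin (n - k)) (Fin (n - k)) F2) ⊗ₖ δᵀ)) *ᵥ v = y := by
      intro y
      refine ⟨Sum.elim (fun p => ∑ b, R p.1 b * y (b, p.2)) 0, ?_⟩
      funext q
      obtain ⟨a, j⟩ := q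
      rw [hd0e]
      have h3 : (∑ i, δ a i * ∑ b, R i b * y (b, j))
          = ∑ b, (∑ i, δ a i * R i b) * y (b, j) := by
        simp only [Finset.mul_sum, Finset.sum_mul]
        exact sum_sum_congr_swap _ _ fun _ _ => by ring
      simp only [Sum.elim_inl, Sum.elim_inr, Pi.zero_apply, zero_mul,
        Finset.sum_const_zero, add_zero]
      rw [h3]
      simp [hδR, ite_mul]
    obtain ⟨hr0, hrn⟩ := rank_of_surj _ hd0surj
    rw [hrank1]
    have hcard1 : Fintype.card (Fin (n - k) × Fin n) = (n - k) * n := by simp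
    have hcard2 : Fintype.card ((Fin n × Fin n) ⊕ (Fin (n - k) × Fin (n - k)))
        = n * n + (n - k) * (n - k) := by simp
    rw [hr0, hcard1, hcard2] at hrn
    have hrn' : ((n - k : ℕ) : ℤ) * (n : ℤ) + (nullity (Matrix.fromCols
        (δ ⊗ₖ (1 : Matrix (Fin n) (Fin n) F2))
        ((1 : Matrix (Fin (n - k)) (Fin (n - k)) F2) ⊗ₖ δᵀ)) : ℤ)
        = (n : ℤ) * (n : ℤ) + ((n - k : ℕ) : ℤ) * ((n - k : ℕ) : ℤ) := by
      exact_mod_cast congrArg (Nat.cast : ℕ → ℤ) hrn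
    have hnk : ((n - k : ℕ) : ℤ) = (n : ℤ) - (k : ℤ) := by omega
    rw [hnk] at hrn'
    push_cast [hnk]
    linear_combination hrn'
  · -- (c) first part
    intro c hc hnot
    have E : ∀ a j, (∑ i, δ a i * c (Sum.inl (i, j))) = ∑ b, c (Sum.inr (a, b)) * δ b j := by
      intro a j
      apply f2_add_eq
      rw [← hd0e c a j]
      exact congrFun hc (a, j)
    by_cases hzex : ∃ z : Fin n → F2, δ *ᵥ z = 0 ∧
        ∃ i, (∑ j, c (Sum.inl (i, j)) * z j) ≠ 0
    · obtain ⟨z, hz1, i0, hi0⟩ := hzex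
      have hwne : (fun i => ∑ j, c (Sum.inl (i, j)) * z j) ≠ (0 : Fin n → F2) := by
        intro h0
        exact hi0 (congrFun h0 i0)
      have hw0 : δ *ᵥ (fun i => ∑ j, c (Sum.inl (i, j)) * z j) = 0 := by
        funext a
        show (∑ i, δ a i * ∑ j, c (Sum.inl (i, j)) * z j) = 0
        have h3 : (∑ i, δ a i * ∑ j, c (Sum.inl (i, j)) * z j)
            = ∑ j, (∑ i, δ a i * c (Sum.inl (i, j))) * z j := by
          simp only [Finset.mul_sum, Finset.sum_mul]
          exact sum_sum_congr_swap _ _ fun _ _ => by ring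
        rw [h3]
        have h4 : (∑ j, (∑ i, δ a i * c (Sum.inl (i, j))) * z j)
            = ∑ b, c (Sum.inr (a, b)) * ∑ j, δ b j * z j := by
          calc (∑ j, (∑ i, δ a i * c (Sum.inl (i, j))) * z j)
              = ∑ j, (∑ b, c (Sum.inr (a, b)) * δ b j) * z j :=
                Finset.sum_congr rfl fun j _ => by rw [E a j]
            _ = ∑ b, c (Sum.inr (a, b)) * ∑ j, δ b j * z j := by
                simp only [Finset.mul_sum, Finset.sum_mul]
                exact sum_sum_congr_swap _ _ fun _ _ => by ring
        rw [h4]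
        have h5 : ∀ b, (∑ j, δ b j * z j) = 0 := fun b => congrFun hz1 b
        simp [h5]
      have hd := hdist _ hwne hw0
      have pick : ∀ i : Fin n, ∃ j : Fin n,
          ((∑ j', c (Sum.inl (i, j')) * z j') ≠ 0 → c (Sum.inl (i, j)) ≠ 0) := by
        intro i
        by_cases h : (∑ j', c (Sum.inl (i, j')) * z j') = 0
        · exact ⟨i, fun h' => absurd h h'⟩
        · obtain ⟨j, hj⟩ := Finset.exists_ne_zero_of_sum_ne_zero h
          exact ⟨j, fun _ => left_ne_zero_of_mul hj.2⟩
      refine le_trans hd (vwt_le_of_injOn _ c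
        (fun i => Sum.inl (i, Classical.choose (pick i)))
        (fun i hi => Classical.choose_spec (pick i) hi) ?_)
      intro i i' _ _ h
      simp only [Sum.inl.injEq, Prod.mk.injEq] at h
      exact h.1
    · exfalso
      apply hnot
      push_neg at hzex
      refine ⟨fun p => ∑ j', c (Sum.inl (p.1, j')) * R j' p.2, ?_⟩
      funext p
      obtain (⟨i, j⟩ | ⟨a, b⟩) := p
      · rw [hdm1l]
        have hz := hzex (fun j' => (if j' = j then (1:F2) else 0) + ∑ b, R j' b * δ b j)
          (zker j) i
        have h1 : (∑ j', c (Sum.inl (i, j'))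
              * ((if j' = j then (1:F2) else 0) + ∑ b, R j' b * δ b j))
            = c (Sum.inl (i, j))
              + ∑ b', (∑ j', c (Sum.inl (i, j')) * R j' b') * δ b' j := by
          have ha : (∑ j', c (Sum.inl (i, j'))
                * ((if j' = j then (1:F2) else 0) + ∑ b, R j' b * δ b j))
              = (∑ j', c (Sum.inl (i, j')) * (if j' = j then (1:F2) else 0))
                + ∑ j', c (Sum.inl (i, j')) * ∑ b, R j' b * δ b j := by
            rw [← Finset.sum_add_distrib]
            exact Finset.sum_congr rfl fun _ _ => mul_add _ _ _
          have hb : (∑ j', c (Sum.inl (i, j')) * (if j' = j then (1:F2) else 0))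
              = c (Sum.inl (i, j)) := by simp [mul_ite]
          have hcc : (∑ j', c (Sum.inl (i, j')) * ∑ b, R j' b * δ b j)
              = ∑ b', (∑ j', c (Sum.inl (i, j')) * R j' b') * δ b' j := by
            simp only [Finset.mul_sum, Finset.sum_mul]
            exact sum_sum_congr_swap _ _ fun _ _ => by ring
          rw [ha, hb, hcc]
        rw [h1] at hz
        exact (f2_add_eq _ _ hz).symm
      · rw [hdm1r]
        calc (∑ i', δ a i' * ∑ j', c (Sum.inl (i', j')) * R j' b)
            = ∑ j', (∑ i', δ a i' * c (Sum.inl (i', j'))) * R j' b := by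
              simp only [Finset.mul_sum, Finset.sum_mul]
              exact sum_sum_congr_swap _ _ fun _ _ => by ring
          _ = ∑ j', (∑ b', c (Sum.inr (a, b')) * δ b' j') * R j' b :=
              Finset.sum_congr rfl fun j' _ => by rw [E a j']
          _ = ∑ b', c (Sum.inr (a, b')) * ∑ j', δ b' j' * R j' b := by
              simp only [Finset.mul_sum, Finset.sum_mul]
              exact sum_sum_congr_swap _ _ fun _ _ => by ring
          _ = c (Sum.inr (a, b)) := by simp [hδR, mul_ite]
  · -- (c) second part
    intro c hc hnot
    have F : ∀ i b, (∑ j', δ b j' * c (Sum.inl (i, j'))) = ∑ a, δ a i * c (Sum.inr (a, b)) := by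
      intro i b
      apply f2_add_eq
      rw [← hdm1te c i b]
      exact congrFun hc (i, b)
    by_cases hzex : ∃ z : Fin n → F2, δ *ᵥ z = 0 ∧
        ∃ j, (∑ i, z i * c (Sum.inl (i, j))) ≠ 0
    · obtain ⟨z, hz1, j0, hj0⟩ := hzex
      have hwne : (fun j => ∑ i, z i * c (Sum.inl (i, j))) ≠ (0 : Fin n → F2) := by
        intro h0
        exact hj0 (congrFun h0 j0)
      have hw0 : δ *ᵥ (fun j => ∑ i, z i * c (Sum.inl (i, j))) = 0 := by
        funext b
        show (∑ j, δ b j * ∑ i, z i * c (Sum.inl (i, j))) = 0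
        have h3 : (∑ j, δ b j * ∑ i, z i * c (Sum.inl (i, j)))
            = ∑ i, z i * ∑ j, δ b j * c (Sum.inl (i, j)) := by
          simp only [Finset.mul_sum, Finset.sum_mul]
          exact sum_sum_congr_swap _ _ fun _ _ => by ring
        rw [h3]
        have h4 : (∑ i, z i * ∑ j, δ b j * c (Sum.inl (i, j)))
            = ∑ a, (∑ i, δ a i * z i) * c (Sum.inr (a, b)) := by
          calc (∑ i, z i * ∑ j, δ b j * c (Sum.inl (i, j)))
              = ∑ i, z i * ∑ a, δ a i * c (Sum.inr (a, b)) :=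
                Finset.sum_congr rfl fun i _ => by rw [F i b]
            _ = ∑ a, (∑ i, δ a i * z i) * c (Sum.inr (a, b)) := by
                simp only [Finset.mul_sum, Finset.sum_mul]
                exact sum_sum_congr_swap _ _ fun _ _ => by ring
        rw [h4]
        have h5 : ∀ a, (∑ i, δ a i * z i) = 0 := fun a => congrFun hz1 a
        simp [h5]
      have hd := hdist _ hwne hw0
      have pick : ∀ j : Fin n, ∃ i : Fin n,
          ((∑ i', z i' * c (Sum.inl (i', j))) ≠ 0 → c (Sum.inl (i, j)) ≠ 0) := by
        intro j
        by_cases h : (∑ i', z i' * c (Sum.inl (i', j))) = 0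
        · exact ⟨j, fun h' => absurd h h'⟩
        · obtain ⟨i, hi⟩ := Finset.exists_ne_zero_of_sum_ne_zero h
          exact ⟨i, fun _ => right_ne_zero_of_mul hi.2⟩
      refine le_trans hd (vwt_le_of_injOn _ c
        (fun j => Sum.inl (Classical.choose (pick j), j))
        (fun j hj => Classical.choose_spec (pick j) hj) ?_)
      intro j j' _ _ h
      simp only [Sum.inl.injEq, Prod.mk.injEq] at h
      exact h.2
    · exfalso
      apply hnot
      push_neg at hzex
      refine ⟨fun p => ∑ i', R i' p.1 * c (Sum.inl (i', p.2)), ?_⟩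
      funext p
      obtain (⟨i, j⟩ | ⟨b, b'⟩) := p
      · rw [hd0tl]
        have hz := hzex (fun i' => (if i' = i then (1:F2) else 0) + ∑ b, R i' b * δ b i)
          (zker i) j
        have h1 : (∑ i', ((if i' = i then (1:F2) else 0) + ∑ b, R i' b * δ b i)
              * c (Sum.inl (i', j)))
            = c (Sum.inl (i, j))
              + ∑ a, δ a i * ∑ i', R i' a * c (Sum.inl (i', j)) := by
          have ha : (∑ i', ((if i' = i then (1:F2) else 0) + ∑ b, R i' b * δ b i)
                * c (Sum.inl (i', j)))
              = (∑ i', (if i' = i then (1:F2) else 0) * c (Sum.inl (i', j)))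
                + ∑ i', (∑ b, R i' b * δ b i) * c (Sum.inl (i', j)) := by
            rw [← Finset.sum_add_distrib]
            exact Finset.sum_congr rfl fun _ _ => add_mul _ _ _
          have hb : (∑ i', (if i' = i then (1:F2) else 0) * c (Sum.inl (i', j)))
              = c (Sum.inl (i, j)) := by simp [ite_mul]
          have hcc : (∑ i', (∑ b, R i' b * δ b i) * c (Sum.inl (i', j)))
              = ∑ a, δ a i * ∑ i', R i' a * c (Sum.inl (i', j)) := by
            simp only [Finset.mul_sum, Finset.sum_mul]
            exact sum_sum_congr_swap _ _ fun _ _ => by ring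
          rw [ha, hb, hcc]
        rw [h1] at hz
        exact (f2_add_eq _ _ hz).symm
      · rw [hd0tr]
        calc (∑ j', (∑ i', R i' b * c (Sum.inl (i', j'))) * δ b' j')
            = ∑ i', R i' b * ∑ j', δ b' j' * c (Sum.inl (i', j')) := by
              simp only [Finset.mul_sum, Finset.sum_mul]
              exact sum_sum_congr_swap _ _ fun _ _ => by ring
          _ = ∑ i', R i' b * ∑ a, δ a i' * c (Sum.inr (a, b')) :=
              Finset.sum_congr rfl fun i' _ => by rw [F i' b']
          _ = ∑ a, (∑ i', δ a i' * R i' b) * c (Sum.inr (a, b')) := by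
              simp only [Finset.mul_sum, Finset.sum_mul]
              exact sum_sum_congr_swap _ _ fun _ _ => by ring
          _ = c (Sum.inr (b, b')) := by simp [hδR, ite_mul]
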